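/- arXiv:2312.00730 — 2 statements merged into one kernel-verified Lean document; each statement's English description precedes it below -/
import Mathlib

section
/- Under the same Crank-Nicolson gyration update with constant B and u⁰ ⊥ B, in the limit Ω Δt₀ → ∞ (first time-step), the first-step displacement satisfies lim x¹ = x⁰ + 2ρ (û⁰ × b), where b = B/‖B‖, û⁰ = u⁰/‖u⁰‖, ρ = ‖u⁰‖/Ω, Ω = ‖B‖. That is, x⁰ and the limiting x¹ are antipodal points on the exact physical gyro-orbit centered at x⁰ + ρ (û⁰ × b). -/
open Real Filter

noncomputable def cross (a b : EuclideanSpace ℝ (Fin 3)) : EuclideanSpace ℝ (Fin 3) :=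
  WithLp.toLp 2 ![a 1 * b 2 - a 2 * b 1, a 2 * b 0 - a 0 * b 2, a 0 * b 1 - a 1 * b 0]

lemma cross_smul_smul (s t : ℝ) (a b : EuclideanSpace ℝ (Fin 3)) :
    cross (s • a) (t • b) = (s * t) • cross a b := by
  ext i
  fin_cases i <;>
    simp [cross, PiLp.smul_apply, smul_eq_mul] <;> ring

lemma inner_cross_self (a b : EuclideanSpace ℝ (Fin 3)) :
    (inner ℝ (cross a b) (cross a b) : ℝ) =
      (inner ℝ a a : ℝ) * (inner ℝ b b : ℝ) - (inner ℝ a b : ℝ) ^ 2 := by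
  simp only [PiLp.inner_apply, RCLike.inner_apply, conj_trivial, Fin.sum_univ_three]
  show ((a 1 * b 2 - a 2 * b 1) * (a 1 * b 2 - a 2 * b 1) +
      (a 2 * b 0 - a 0 * b 2) * (a 2 * b 0 - a 0 * b 2) +
      (a 0 * b 1 - a 1 * b 0) * (a 0 * b 1 - a 1 * b 0)) = _
  ring

lemma norm_cross (a b : EuclideanSpace ℝ (Fin 3)) (h : (inner ℝ a b : ℝ) = 0) :
    ‖cross a b‖ = ‖a‖ * ‖b‖ := by
  have h1 := inner_cross_self a b
  rw [h, real_inner_self_eq_norm_sq, real_inner_self_eq_norm_sq,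
    real_inner_self_eq_norm_sq] at h1
  nlinarith [norm_nonneg (cross a b), mul_nonneg (norm_nonneg a) (norm_nonneg b),
    sq_nonneg (‖cross a b‖ - ‖a‖ * ‖b‖), sq_nonneg (‖cross a b‖ + ‖a‖ * ‖b‖)]

/-- In the limit ΩΔt₀ → ∞, the first Crank-Nicolson step moves the particle to
the point diametrically opposite x⁰ on the exact gyro-orbit:
x¹ → x⁰ + 2ρ (û⁰ × b), with the orbit centered at x⁰ + ρ (û⁰ × b). -/
theorem stmt_8 (B u0 x0 : EuclideanSpace ℝ (Fin 3)) (hB : B ≠ 0) (hu0 : u0 ≠ 0)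
    (hperp : (inner ℝ u0 B : ℝ) = 0) :
    Tendsto
      (fun Δt : ℝ => x0 + Δt •
        ((1 + ‖B‖ ^ 2 * Δt ^ 2 / 4)⁻¹ • (u0 + (Δt / 2) • cross u0 B)))
      atTop
      (nhds (x0 + (2 * (‖u0‖ / ‖B‖)) • cross (‖u0‖⁻¹ • u0) (‖B‖⁻¹ • B))) ∧
    ‖(x0 + (2 * (‖u0‖ / ‖B‖)) • cross (‖u0‖⁻¹ • u0) (‖B‖⁻¹ • B)) -
        (x0 + (‖u0‖ / ‖B‖) • cross (‖u0‖⁻¹ • u0) (‖B‖⁻¹ • B))‖ = ‖u0‖ / ‖B‖ ∧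
    ‖x0 - (x0 + (‖u0‖ / ‖B‖) • cross (‖u0‖⁻¹ • u0) (‖B‖⁻¹ • B))‖ = ‖u0‖ / ‖B‖ := by
  have hnu : ‖u0‖ ≠ 0 := norm_ne_zero_iff.mpr hu0
  have hnB : ‖B‖ ≠ 0 := norm_ne_zero_iff.mpr hB
  have hcross : cross (‖u0‖⁻¹ • u0) (‖B‖⁻¹ • B) = (‖u0‖⁻¹ * ‖B‖⁻¹) • cross u0 B :=
    cross_smul_smul _ _ _ _
  set w : EuclideanSpace ℝ (Fin 3) := cross u0 B with hw
  have hnw : ‖w‖ = ‖u0‖ * ‖B‖ := norm_cross u0 B hperp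
  set c : ℝ := ‖B‖ ^ 2 with hc
  have hcpos : 0 < c := by positivity
  refine ⟨?_, ?_, ?_⟩
  · -- the limit
    have key : (2 * (‖u0‖ / ‖B‖)) • cross (‖u0‖⁻¹ • u0) (‖B‖⁻¹ • B) = (2 / c) • w := by
      rw [hcross, smul_smul]
      congr 1
      field_simp [hc]
      ring
    rw [key]
    have hfun : (fun Δt : ℝ => x0 + Δt •
        ((1 + c * Δt ^ 2 / 4)⁻¹ • (u0 + (Δt / 2) • w))) =
        (fun Δt : ℝ => x0 + ((Δt * (1 + c * Δt ^ 2 / 4)⁻¹) • u0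
          + (Δt * (1 + c * Δt ^ 2 / 4)⁻¹ * (Δt / 2)) • w)) := by
      funext t
      simp only [smul_add, smul_smul, mul_assoc]
    rw [hfun]
    have hden : Tendsto (fun t : ℝ => ((t ^ 2)⁻¹ + c / 4)⁻¹) atTop (nhds (c / 4)⁻¹) := by
      refine Tendsto.inv₀ ?_ (by positivity)
      have h0 : Tendsto (fun t : ℝ => (t ^ 2)⁻¹) atTop (nhds 0) := by
        have h1 : Tendsto (fun x : ℝ => x ^ 2) atTop atTop := tendsto_pow_atTop two_ne_zero
        simpa [Pi.inv_def] using h1.inv_tendsto_atTop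
      simpa using h0.add tendsto_const_nhds
    have hf : Tendsto (fun t : ℝ => t * (1 + c * t ^ 2 / 4)⁻¹) atTop (nhds 0) := by
      have heq : ∀ᶠ t : ℝ in atTop, t⁻¹ * ((t ^ 2)⁻¹ + c / 4)⁻¹
          = t * (1 + c * t ^ 2 / 4)⁻¹ := by
        filter_upwards [eventually_ge_atTop (1 : ℝ)] with t ht
        have htne : t ≠ 0 := by linarith
        have hdne : (1 : ℝ) + c * t ^ 2 / 4 ≠ 0 := by positivity
        field_simp
      refine Tendsto.congr' heq ?_
      have := tendsto_inv_atTop_zero.mul hden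
      simpa using this
    have hg : Tendsto (fun t : ℝ => t * (1 + c * t ^ 2 / 4)⁻¹ * (t / 2)) atTop
        (nhds (2 / c)) := by
      have heq : ∀ᶠ t : ℝ in atTop, (1 / 2) * ((t ^ 2)⁻¹ + c / 4)⁻¹
          = t * (1 + c * t ^ 2 / 4)⁻¹ * (t / 2) := by
        filter_upwards [eventually_ge_atTop (1 : ℝ)] with t ht
        have htne : t ≠ 0 := by linarith
        have hdne : (1 : ℝ) + c * t ^ 2 / 4 ≠ 0 := by positivity
        field_simp
      refine Tendsto.congr' heq ?_
      have hval : (2 : ℝ) / c = 1 / 2 * (c / 4)⁻¹ := by rw [inv_div]; ring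
      rw [hval]
      exact tendsto_const_nhds.mul hden
    have := tendsto_const_nhds (x := x0) (f := atTop (α := ℝ))
    have hlim := this.add ((hf.smul_const u0).add (hg.smul_const w))
    simpa using hlim
  · -- first norm
    rw [hcross, smul_smul, smul_smul]
    have : x0 + (2 * (‖u0‖ / ‖B‖) * (‖u0‖⁻¹ * ‖B‖⁻¹)) • w
        - (x0 + (‖u0‖ / ‖B‖ * (‖u0‖⁻¹ * ‖B‖⁻¹)) • w)
        = (‖u0‖ / ‖B‖ * (‖u0‖⁻¹ * ‖B‖⁻¹)) • w := by
      rw [add_sub_add_left_eq_sub, ← sub_smul]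
      congr 1
      ring
    rw [this, norm_smul, hnw]
    simp only [Real.norm_eq_abs]
    rw [abs_of_nonneg (by positivity)]
    field_simp
  · -- second norm
    rw [hcross, smul_smul]
    have : x0 - (x0 + (‖u0‖ / ‖B‖ * (‖u0‖⁻¹ * ‖B‖⁻¹)) • w)
        = -((‖u0‖ / ‖B‖ * (‖u0‖⁻¹ * ‖B‖⁻¹)) • w) := by
      abel
    rw [this, norm_neg, norm_smul, hnw]
    simp only [Real.norm_eq_abs]
    rw [abs_of_nonneg (by positivity)]
    field_simp
end

section
/- For u^n ⊥ B evolving by the Crank-Nicolson rotation u^{n+1} = R_θ u^n (rotation by angle θ about b with cos θ = (1 - Ω²Δt²/4)/(1+Ω²Δt²/4)), the half-step speeds satisfy ((‖u^{n+1}‖ + ‖u^n‖)/(2‖u^{n+1/2}‖))² = 2/(1 + cos θ) = 1 + Ω²Δt²/4, and consequently 1 - (‖u^{n+1}‖ + ‖u^n‖)/(2‖u^{n+1/2}‖) = 1 - √(1 + Ω²Δt²/4) = -Ω²Δt²/8 + O(Δt⁴) as Δt → 0. -/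
open Real Filter

lemma inner3 (x y : EuclideanSpace ℝ (Fin 3)) :
    (inner ℝ x y : ℝ) = x 0 * y 0 + x 1 * y 1 + x 2 * y 2 := by
  simp [PiLp.inner_apply, Fin.sum_univ_three, RCLike.inner_apply, mul_comm]

lemma normsq3 (x : EuclideanSpace ℝ (Fin 3)) : ‖x‖^2 = x 0^2 + x 1^2 + x 2^2 := by
  rw [← real_inner_self_eq_norm_sq, inner3]; ring

open Asymptotics in
lemma sqrt_bigO (cB : ℝ) (hcB : 0 ≤ cB) :
    (fun s : ℝ => (1 - Real.sqrt (1 + cB * s ^ 2 / 4)) - (-(cB * s ^ 2 / 8)))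
      =O[nhds 0] (fun s : ℝ => s ^ 4) := by
  rw [isBigO_iff]
  refine ⟨cB^2/128, Filter.Eventually.of_forall fun t => ?_⟩
  have hnn : (0:ℝ) ≤ 1 + cB * t^2 / 4 := by positivity
  have hg2 : Real.sqrt (1 + cB * t^2 / 4) ^ 2 = 1 + cB * t^2 / 4 := Real.sq_sqrt hnn
  have hg0 : 0 ≤ Real.sqrt (1 + cB * t^2 / 4) := Real.sqrt_nonneg _
  have hg1 : 1 ≤ Real.sqrt (1 + cB * t^2 / 4) := by nlinarith [sq_nonneg t]
  have hA : (1 + cB * t^2 / 8 - Real.sqrt (1 + cB * t^2 / 4)) *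
      (1 + cB * t^2 / 8 + Real.sqrt (1 + cB * t^2 / 4)) = cB^2 * t^4 / 64 := by
    linear_combination -hg2
  have hpos : 0 ≤ 1 + cB * t^2 / 8 - Real.sqrt (1 + cB * t^2 / 4) := by
    nlinarith [hA, hg1, sq_nonneg t, mul_nonneg (mul_nonneg hcB hcB) (sq_nonneg (t^2))]
  have hbd : 1 + cB * t^2 / 8 - Real.sqrt (1 + cB * t^2 / 4) ≤ cB^2 * t^4 / 128 := by
    nlinarith [hA, hg1, hpos]
  have heq : (1 - Real.sqrt (1 + cB * t^2 / 4)) - (-(cB * t^2 / 8)) =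
      1 + cB * t^2 / 8 - Real.sqrt (1 + cB * t^2 / 4) := by ring
  simp only [Real.norm_eq_abs, heq]
  rw [abs_of_nonneg hpos, abs_of_nonneg (by positivity : (0:ℝ) ≤ t^4)]
  linarith [hbd]


open Asymptotics in
/-- Half-step speed relation for the Crank-Nicolson rotation:
((‖u¹‖+‖u⁰‖)/(2‖u^{1/2}‖))² = 2/(1+cos θ) = 1 + Ω²Δt²/4, and
1 - √(1+Ω²Δt²/4) = -Ω²Δt²/8 + O(Δt⁴) as Δt → 0. -/
theorem stmt_17 (B u0 u1 uh : EuclideanSpace ℝ (Fin 3)) (hB : B ≠ 0) (hu0 : u0 ≠ 0)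
    (hperp : (inner ℝ u0 B : ℝ) = 0) (Δt θ : ℝ) (hΔt : 0 < Δt)
    (hθ : θ ∈ Set.Ioo 0 Real.pi)
    (hcos : Real.cos θ = (1 - ‖B‖ ^ 2 * Δt ^ 2 / 4) / (1 + ‖B‖ ^ 2 * Δt ^ 2 / 4))
    (hrot : u1 = Real.cos θ • u0 + Real.sin θ • cross (‖B‖⁻¹ • B) u0)
    (hhalf : uh = (1 / 2 : ℝ) • (u0 + u1)) :
    ((‖u1‖ + ‖u0‖) / (2 * ‖uh‖)) ^ 2 = 2 / (1 + Real.cos θ) ∧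
    ((‖u1‖ + ‖u0‖) / (2 * ‖uh‖)) ^ 2 = 1 + ‖B‖ ^ 2 * Δt ^ 2 / 4 ∧
    (fun s : ℝ => (1 - Real.sqrt (1 + ‖B‖ ^ 2 * s ^ 2 / 4)) - (-(‖B‖ ^ 2 * s ^ 2 / 8)))
      =O[nhds 0] (fun s : ℝ => s ^ 4) := by
  have hnB : ‖B‖ ≠ 0 := norm_ne_zero_iff.mpr hB
  have hBB : ‖B‖^2 = B 0^2 + B 1^2 + B 2^2 := normsq3 B
  have hperp' : u0 0 * B 0 + u0 1 * B 1 + u0 2 * B 2 = 0 := by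
    rw [← inner3]; exact hperp
  have pyth : Real.sin θ ^ 2 + Real.cos θ ^ 2 = 1 := Real.sin_sq_add_cos_sq θ
  have hu1c : ∀ i, u1 i = Real.cos θ * u0 i + Real.sin θ * (cross (‖B‖⁻¹ • B) u0) i := by
    intro i; rw [hrot]; rfl
  have hcr0 : (cross (‖B‖⁻¹ • B) u0) 0 = ‖B‖⁻¹ * B 1 * u0 2 - ‖B‖⁻¹ * B 2 * u0 1 := by
    simp [cross]
  have hcr1 : (cross (‖B‖⁻¹ • B) u0) 1 = ‖B‖⁻¹ * B 2 * u0 0 - ‖B‖⁻¹ * B 0 * u0 2 := by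
    simp [cross]
  have hcr2 : (cross (‖B‖⁻¹ • B) u0) 2 = ‖B‖⁻¹ * B 0 * u0 1 - ‖B‖⁻¹ * B 1 * u0 0 := by
    simp [cross]
  have h1 : ‖u1‖^2 = ‖u0‖^2 := by
    rw [normsq3, normsq3, hu1c 0, hu1c 1, hu1c 2, hcr0, hcr1, hcr2]
    field_simp
    linear_combination ((u0 0^2 + u0 1^2 + u0 2^2) * ‖B‖^2) * pyth
      - (Real.sin θ^2 * (u0 0^2 + u0 1^2 + u0 2^2)) * hBB
      - (Real.sin θ^2 * (u0 0 * B 0 + u0 1 * B 1 + u0 2 * B 2)) * hperp'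
  have h2 : (inner ℝ u0 u1 : ℝ) = Real.cos θ * ‖u0‖^2 := by
    rw [inner3, normsq3, hu1c 0, hu1c 1, hu1c 2, hcr0, hcr1, hcr2]; ring
  have huh2 : ‖uh‖^2 = (1 + Real.cos θ)/2 * ‖u0‖^2 := by
    rw [hhalf, norm_smul, mul_pow, norm_add_sq_real, h1, h2]
    simp; ring
  have hxpos : 0 < ‖B‖^2 * Δt^2 / 4 := by
    have : 0 < ‖B‖ := norm_pos_iff.mpr hB
    positivity
  have h1x : (0:ℝ) < 1 + ‖B‖^2 * Δt^2 / 4 := by linarith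
  have hcx : 1 + Real.cos θ = 2 / (1 + ‖B‖^2 * Δt^2 / 4) := by
    rw [hcos]; field_simp; ring
  have hcpos : 0 < 1 + Real.cos θ := by rw [hcx]; positivity
  have hu0pos : 0 < ‖u0‖ := norm_pos_iff.mpr hu0
  have huhsq : 0 < ‖uh‖^2 := by rw [huh2]; positivity
  have huhpos : 0 < ‖uh‖ := by
    rcases (norm_nonneg uh).lt_or_eq with h | h
    · exact h
    · exfalso; rw [← h] at huhsq; simp at huhsq
  have hueq : ‖u1‖ = ‖u0‖ := by
    rw [← Real.sqrt_sq (norm_nonneg u1), h1, Real.sqrt_sq (norm_nonneg u0)]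
  have g1 : ((‖u1‖ + ‖u0‖) / (2 * ‖uh‖)) ^ 2 = 2 / (1 + Real.cos θ) := by
    rw [hueq]
    field_simp
    linear_combination (-8:ℝ) * huh2
  refine ⟨g1, ?_, sqrt_bigO (‖B‖^2) (sq_nonneg _)⟩
  rw [g1, hcx]
  field_simp
end
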